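/- Assume 0 ≤ β < 1 and ω > 0 satisfy ω + 2β < 2 with β = 0 (i.e., 0 < ω < 2), and let x* be any vector with A x* = b. Let x̂_k = (1/k) Σ_{t=1}^{k} x_t be the Cesaro average of the SGD iterates x_{t+1} = x_t − ω Aᵀ H_t (A x_t − b). Then for all k ≥ 1, E[f(x̂_k)] ≤ ‖x0 − x*‖² / (2ω(2 − ω) k). -/

import Mathlib

open Matrix MeasureTheory ProbabilityTheory

/-- Matrices over measurable entries carry the product σ-algebra. -/
local instance {m n : ℕ} : MeasurableSpace (Matrix (Fin m) (Fin n) ℝ) :=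
  MeasurableSpace.pi

namespace SGDaux

variable {Ω : Type*} [MeasurableSpace Ω]

lemma meas_entry {m n : ℕ} {M : Ω → Matrix (Fin m) (Fin n) ℝ} (hM : Measurable M)
    (i : Fin m) (j : Fin n) : Measurable fun s => M s i j :=
  (measurable_pi_apply j).comp ((measurable_pi_apply i).comp hM)

lemma meas_mulVec {m n : ℕ} {M : Ω → Matrix (Fin m) (Fin n) ℝ} {v : Ω → Fin n → ℝ}
    (hM : Measurable M) (hv : Measurable v) : Measurable fun s => M s *ᵥ v s := by
  apply measurable_pi_lambda
  intro i
  simp only [Matrix.mulVec, dotProduct]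
  exact Finset.measurable_sum _ fun j _ =>
    (meas_entry hM i j).mul ((measurable_pi_apply j).comp hv)

lemma meas_entry' {n : ℕ} {v : Ω → Fin n → ℝ} (hv : Measurable v) (i : Fin n) :
    Measurable fun s => v s i :=
  (measurable_pi_apply i).comp hv

lemma meas_dot {n : ℕ} {u v : Ω → Fin n → ℝ} (hu : Measurable u) (hv : Measurable v) :
    Measurable fun s => u s ⬝ᵥ v s := by
  simp only [dotProduct]
  exact Finset.measurable_sum _ fun j _ =>
    ((measurable_pi_apply j).comp hu).mul ((measurable_pi_apply j).comp hv)

lemma integrable_of_bound (μ : Measure Ω) [IsFiniteMeasure μ] {f : Ω → ℝ} (c : ℝ)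
    (hf : AEStronglyMeasurable f μ) (h : ∀ᵐ s ∂μ, |f s| ≤ c) : Integrable f μ :=
  Integrable.mono' (integrable_const c) hf (by simpa [Real.norm_eq_abs] using h)

lemma dot_expand {m : ℕ} (M : Matrix (Fin m) (Fin m) ℝ) (u w : Fin m → ℝ) :
    u ⬝ᵥ (M *ᵥ w) = ∑ i, ∑ j, u i * w j * M i j := by
  simp only [dotProduct, Matrix.mulVec]
  exact Finset.sum_congr rfl fun i _ => by
    rw [Finset.mul_sum]; exact Finset.sum_congr rfl fun j _ => by ring

lemma dot_self_nonneg {n : ℕ} (v : Fin n → ℝ) : 0 ≤ v ⬝ᵥ v :=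
  Finset.sum_nonneg fun i _ => mul_self_nonneg _

lemma dot_symm_of {m : ℕ} {W : Matrix (Fin m) (Fin m) ℝ} (hsym : Wᵀ = W)
    (u v : Fin m → ℝ) : u ⬝ᵥ (W *ᵥ v) = v ⬝ᵥ (W *ᵥ u) := by
  conv_lhs => rw [← hsym, Matrix.mulVec_transpose, dotProduct_comm,
    ← Matrix.dotProduct_mulVec]

lemma pair_le {m : ℕ} {W : Matrix (Fin m) (Fin m) ℝ} (hsym : Wᵀ = W)
    (hpos : ∀ z, 0 ≤ z ⬝ᵥ (W *ᵥ z)) (u v : Fin m → ℝ) :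
    u ⬝ᵥ (W *ᵥ v) ≤ (u ⬝ᵥ (W *ᵥ u) + v ⬝ᵥ (W *ᵥ v)) / 2 := by
  have h := hpos (u - v)
  rw [Matrix.mulVec_sub, sub_dotProduct, dotProduct_sub,
    dotProduct_sub] at h
  have hs := dot_symm_of hsym u v
  linarith

lemma sum_dot {ι : Type*} {n : ℕ} (I : Finset ι) (v : ι → Fin n → ℝ) (w : Fin n → ℝ) :
    (∑ t ∈ I, v t) ⬝ᵥ w = ∑ t ∈ I, v t ⬝ᵥ w := by
  simp only [dotProduct, Finset.sum_apply, Finset.sum_mul]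
  exact Finset.sum_comm

lemma mulVec_sum' {ι : Type*} {p n : ℕ} (I : Finset ι) (W : Matrix (Fin p) (Fin n) ℝ)
    (v : ι → Fin n → ℝ) : W *ᵥ (∑ t ∈ I, v t) = ∑ t ∈ I, W *ᵥ v t := by
  ext i
  simp only [Matrix.mulVec, dotProduct, Finset.sum_apply, Finset.mul_sum]
  exact Finset.sum_comm

lemma cesaro_quad {m : ℕ} (W : Matrix (Fin m) (Fin m) ℝ) (hsym : Wᵀ = W)
    (hpos : ∀ z, 0 ≤ z ⬝ᵥ (W *ᵥ z)) (k : ℕ) (hk : 1 ≤ k) (z : ℕ → Fin m → ℝ) :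
    ((k:ℝ)⁻¹ • ∑ t ∈ Finset.Icc 1 k, z t) ⬝ᵥ (W *ᵥ ((k:ℝ)⁻¹ • ∑ t ∈ Finset.Icc 1 k, z t))
      ≤ (k:ℝ)⁻¹ * ∑ t ∈ Finset.Icc 1 k, (z t ⬝ᵥ (W *ᵥ z t)) := by
  have hk0 : (0:ℝ) < (k:ℝ) := by exact_mod_cast hk
  have hcard : (Finset.Icc 1 k).card = k := by simp
  set S := ∑ t ∈ Finset.Icc 1 k, z t with hS
  have h1 : ((k:ℝ)⁻¹ • S) ⬝ᵥ (W *ᵥ ((k:ℝ)⁻¹ • S)) = (k:ℝ)⁻¹ * ((k:ℝ)⁻¹ * (S ⬝ᵥ (W *ᵥ S))) := by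
    rw [Matrix.mulVec_smul, smul_dotProduct, dotProduct_smul, smul_eq_mul,
      smul_eq_mul]
  have h2 : S ⬝ᵥ (W *ᵥ S) = ∑ t ∈ Finset.Icc 1 k, ∑ r ∈ Finset.Icc 1 k, z t ⬝ᵥ (W *ᵥ z r) := by
    rw [hS, sum_dot]
    exact Finset.sum_congr rfl fun t _ => by
      rw [mulVec_sum']
      simp only [dotProduct, Finset.sum_apply, Finset.mul_sum]
      exact Finset.sum_comm
  have h3 : S ⬝ᵥ (W *ᵥ S) ≤ (k:ℝ) * ∑ t ∈ Finset.Icc 1 k, z t ⬝ᵥ (W *ᵥ z t) := by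
    rw [h2]
    calc ∑ t ∈ Finset.Icc 1 k, ∑ r ∈ Finset.Icc 1 k, z t ⬝ᵥ (W *ᵥ z r)
        ≤ ∑ t ∈ Finset.Icc 1 k, ∑ r ∈ Finset.Icc 1 k,
            ((z t ⬝ᵥ (W *ᵥ z t) + z r ⬝ᵥ (W *ᵥ z r)) / 2) :=
          Finset.sum_le_sum fun t _ => Finset.sum_le_sum fun r _ => pair_le hsym hpos _ _
      _ = (k:ℝ) * ∑ t ∈ Finset.Icc 1 k, z t ⬝ᵥ (W *ᵥ z t) := by
          simp only [add_div, Finset.sum_add_distrib, Finset.sum_const, hcard,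
            nsmul_eq_mul, Finset.sum_div, Finset.mul_sum]
          ring_nf
          rw [Finset.sum_mul]
          exact Finset.sum_congr rfl fun t _ => by ring
  rw [h1]
  have hnn : 0 ≤ (k:ℝ)⁻¹ := by positivity
  calc (k:ℝ)⁻¹ * ((k:ℝ)⁻¹ * (S ⬝ᵥ (W *ᵥ S)))
      ≤ (k:ℝ)⁻¹ * ((k:ℝ)⁻¹ * ((k:ℝ) * ∑ t ∈ Finset.Icc 1 k, z t ⬝ᵥ (W *ᵥ z t))) := by
        apply mul_le_mul_of_nonneg_left (mul_le_mul_of_nonneg_left h3 hnn) hnn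
    _ = (k:ℝ)⁻¹ * ∑ t ∈ Finset.Icc 1 k, z t ⬝ᵥ (W *ᵥ z t) := by
        field_simp

end SGDaux

namespace SGDaux

lemma key_step {m d : ℕ} (A : Matrix (Fin m) (Fin d) ℝ) (b : Fin m → ℝ)
    (xstar : Fin d → ℝ) (hxstar : A *ᵥ xstar = b) (ω : ℝ)
    (Hm : Matrix (Fin m) (Fin m) ℝ) (P : Hm.PosSemidef)
    (PE : Hm * (A * Aᵀ) * Hm = Hm) (y : Fin d → ℝ) :
    ((y - ω • (Aᵀ *ᵥ (Hm *ᵥ (A *ᵥ y - b)))) - xstar) ⬝ᵥ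
        ((y - ω • (Aᵀ *ᵥ (Hm *ᵥ (A *ᵥ y - b)))) - xstar)
      = (y - xstar) ⬝ᵥ (y - xstar)
        - ω * (2 - ω) * ((A *ᵥ y - b) ⬝ᵥ (Hm *ᵥ (A *ᵥ y - b))) := by
  have hsymm : Hmᵀ = Hm := by
    ext i j
    simpa using congrFun (congrFun P.1 i) j
  set e := A *ᵥ y - b with he
  have he' : e = A *ᵥ (y - xstar) := by rw [he, Matrix.mulVec_sub, hxstar]
  set u := Hm *ᵥ e with hu
  set w := Aᵀ *ᵥ u with hw
  have hy : (y - ω • w) - xstar = (y - xstar) - ω • w := sub_right_comm y (ω • w) xstar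
  rw [hy]
  have h1 : (y - xstar) ⬝ᵥ w = e ⬝ᵥ u := by
    rw [hw, Matrix.dotProduct_mulVec, Matrix.vecMul_transpose, ← he', hu]
  have h2 : w ⬝ᵥ (y - xstar) = e ⬝ᵥ u := by rw [dotProduct_comm]; exact h1
  have h3 : w ⬝ᵥ w = e ⬝ᵥ u := by
    rw [hw, Matrix.dotProduct_mulVec, Matrix.vecMul_transpose, Matrix.mulVec_mulVec, hu,
      Matrix.mulVec_mulVec, Matrix.dotProduct_mulVec, ← Matrix.mulVec_transpose, hsymm,
      Matrix.mulVec_mulVec, ← Matrix.mul_assoc, PE, dotProduct_comm]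
  set v := y - xstar with hv
  simp only [sub_dotProduct, dotProduct_sub, smul_dotProduct,
    dotProduct_smul, smul_eq_mul, h1, h2, h3]
  ring

end SGDaux


open SGDaux

/-- Sublinear convergence of the Cesaro average of the SGD iterates
(the `β = 0` case of the stochastic heavy ball method, so `0 < ω < 2`).  Let `x*` be
any vector with `A x* = b`.  Let `x̂_k = (1/k) Σ_{t=1}^{k} x_t` be the Cesaro average
of the SGD iterates `x (t+1) = x t − ω Aᵀ H_t (A x_t − b)`.  Then for all `k ≥ 1`,
`E[f(x̂_k)] ≤ ‖x0 − x*‖² / (2ω(2 − ω) k)`. -/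
theorem sgd_cesaro_average_sublinear {m d : ℕ}
    {Ω : Type*} [MeasurableSpace Ω] (μ : Measure Ω) [IsProbabilityMeasure μ]
    (A : Matrix (Fin m) (Fin d) ℝ) (b : Fin m → ℝ)
    -- the i.i.d. random matrices `H_k`, a.s. symmetric psd with `H A Aᵀ H = H`
    (H : ℕ → Ω → Matrix (Fin m) (Fin m) ℝ)
    (hHmeas : ∀ k, Measurable (H k))
    (hHiid : iIndepFun H μ)
    (hHident : ∀ k, μ.map (H k) = μ.map (H 0))
    (hHas : ∀ k, ∀ᵐ s ∂μ, (H k s).PosSemidef ∧ H k s * (A * Aᵀ) * H k s = H k s)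
    (hHint : ∀ k i j, Integrable (fun s => H k s i j) μ)
    -- `W = E[H_0]`
    (W : Matrix (Fin m) (Fin m) ℝ)
    (hW : ∀ i j, W i j = ∫ s, H 0 s i j ∂μ)
    -- the objective `f`
    (f : (Fin d → ℝ) → ℝ)
    (hf : ∀ y, f y = (1 / 2) * ((A *ᵥ y - b) ⬝ᵥ (W *ᵥ (A *ᵥ y - b))))
    -- stepsize (the case `β = 0` of `ω + 2β < 2`)
    (ω : ℝ) (hω0 : 0 < ω) (hω2 : ω < 2)
    -- the SGD iterates, started from deterministic `x0`
    (x0 : Fin d → ℝ)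
    (x : ℕ → Ω → (Fin d → ℝ))
    (hx0 : ∀ s, x 0 s = x0)
    (hrec : ∀ t : ℕ, ∀ s,
      x (t + 1) s = x t s - ω • (Aᵀ *ᵥ (H t s *ᵥ (A *ᵥ x t s - b))))
    -- `x*` is any solution of the linear system
    (xstar : Fin d → ℝ) (hxstar : A *ᵥ xstar = b) :
    ∀ k : ℕ, 1 ≤ k →
      ∫ s, f (((k : ℝ))⁻¹ • ∑ t ∈ Finset.Icc 1 k, x t s) ∂μ
        ≤ ((x0 - xstar) ⬝ᵥ (x0 - xstar)) / (2 * ω * (2 - ω) * k) := by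
  intro k hk
  have hc : 0 < ω * (2 - ω) := by nlinarith
  set N0 : ℝ := (x0 - xstar) ⬝ᵥ (x0 - xstar) with hN0
  have hN0nn : 0 ≤ N0 := dot_self_nonneg _
  set U : ℕ → Ω → Fin m → ℝ := fun t s => A *ᵥ x t s - b with hU
  set g : ℕ → Ω → ℝ := fun t s => U t s ⬝ᵥ (H t s *ᵥ U t s) with hg
  set N : ℕ → Ω → ℝ := fun t s => (x t s - xstar) ⬝ᵥ (x t s - xstar) with hN
  set C : Fin m → ℝ := fun i => (∑ j, |A i j|) * Real.sqrt N0 with hC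
  have hCnn : ∀ i, 0 ≤ C i := fun i =>
    mul_nonneg (Finset.sum_nonneg fun j _ => abs_nonneg _) (Real.sqrt_nonneg _)
  -- measurability of the iterates
  have hxmeas : ∀ t, Measurable (x t) := by
    intro t; induction t with
    | zero =>
        have : x 0 = fun _ => x0 := funext hx0
        rw [this]; exact measurable_const
    | succ t ih =>
        have : x (t+1) = fun s => x t s - ω • (Aᵀ *ᵥ (H t s *ᵥ (A *ᵥ x t s - b))) :=
          funext (hrec t)
        rw [this]
        exact ih.sub ((meas_mulVec measurable_const (meas_mulVec (hHmeas t)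
          ((meas_mulVec measurable_const ih).sub measurable_const))).const_smul ω)
  have hUmeas : ∀ t, Measurable (U t) :=
    fun t => (meas_mulVec measurable_const (hxmeas t)).sub measurable_const
  -- a.s. pathwise behaviour
  have hmain : ∀ᵐ s ∂μ, ∀ t, N (t+1) s = N t s - ω * (2 - ω) * g t s ∧ 0 ≤ g t s := by
    have hAS : ∀ᵐ s ∂μ, ∀ t, (H t s).PosSemidef ∧ H t s * (A * Aᵀ) * H t s = H t s :=
      (ae_all_iff).2 hHas
    filter_upwards [hAS] with s hs
    intro t
    constructor
    · have hk2 := key_step A b xstar hxstar ω (H t s) (hs t).1 (hs t).2 (x t s)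
      simp only [hN, hg, hU]
      rw [hrec t s]
      exact hk2
    · have := (hs t).1.dotProduct_mulVec_nonneg (U t s)
      simpa [hg] using this
  -- a.e. consequences: boundedness and the telescoped sum bound
  have hcons : ∀ᵐ s ∂μ, (∀ t, N t s ≤ N0) ∧
      (ω * (2 - ω)) * ∑ t ∈ Finset.Icc 1 k, g t s ≤ N0 ∧
      (∀ t i, |U t s i| ≤ C i) := by
    filter_upwards [hmain] with s hs
    have hN00 : N 0 s = N0 := by simp [hN, hx0, hN0]
    have htele : ∀ n, (ω * (2 - ω)) * ∑ t ∈ Finset.range n, g t s + N n s = N0 := by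
      intro n; induction n with
      | zero => simpa using hN00
      | succ n ih =>
          rw [Finset.sum_range_succ, (hs n).1]
          linear_combination ih
    have hsumnn : ∀ (I : Finset ℕ), 0 ≤ ∑ t ∈ I, g t s :=
      fun I => Finset.sum_nonneg fun t _ => (hs t).2
    have hNle : ∀ t, N t s ≤ N0 := by
      intro t
      have := htele t
      nlinarith [hsumnn (Finset.range t), hc]
    have hNnn : ∀ t, 0 ≤ N t s := fun t => dot_self_nonneg _
    refine ⟨hNle, ?_, ?_⟩
    · have hsub : Finset.Icc 1 k ⊆ Finset.range (k+1) := by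
        intro t ht
        simp only [Finset.mem_Icc] at ht
        simp only [Finset.mem_range]
        omega
      have h1 : ∑ t ∈ Finset.Icc 1 k, g t s ≤ ∑ t ∈ Finset.range (k+1), g t s :=
        Finset.sum_le_sum_of_subset_of_nonneg hsub fun t _ _ => (hs t).2
      have h2 := htele (k+1)
      nlinarith [hNnn (k+1), hc]
    · intro t i
      have hvb : ∀ j, |x t s j - xstar j| ≤ Real.sqrt N0 := by
        intro j
        have h1 : (x t s j - xstar j)^2 ≤ N t s := by
          have : N t s = ∑ j', (x t s j' - xstar j') * (x t s j' - xstar j') := by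
            simp only [hN, dotProduct, Pi.sub_apply]
          rw [this]
          rw [pow_two]
          exact Finset.single_le_sum
            (f := fun j' => (x t s j' - xstar j') * (x t s j' - xstar j'))
            (fun j' _ => mul_self_nonneg _) (Finset.mem_univ j)
        have := Real.sqrt_le_sqrt (h1.trans (hNle t))
        calc |x t s j - xstar j| = Real.sqrt ((x t s j - xstar j)^2) := (Real.sqrt_sq_eq_abs _).symm
          _ ≤ Real.sqrt N0 := this
      have hUeq : U t s = A *ᵥ (x t s - xstar) := by
        simp only [hU, Matrix.mulVec_sub, hxstar]
      have : |U t s i| = |∑ j, A i j * (x t s j - xstar j)| := by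
        rw [hUeq]; rfl
      rw [this, hC]
      calc |∑ j, A i j * (x t s j - xstar j)| ≤ ∑ j, |A i j * (x t s j - xstar j)| :=
            Finset.abs_sum_le_sum_abs _ _
        _ ≤ ∑ j, |A i j| * Real.sqrt N0 := by
            apply Finset.sum_le_sum
            intro j _
            rw [abs_mul]
            exact mul_le_mul_of_nonneg_left (hvb j) (abs_nonneg _)
        _ = (∑ j, |A i j|) * Real.sqrt N0 := by rw [Finset.sum_mul]
  -- integrability of products of entries
  have hUb : ∀ t i, ∀ᵐ s ∂μ, |U t s i| ≤ C i := by
    intro t i; filter_upwards [hcons] with s hs; exact hs.2.2 t i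
  have hUij_int : ∀ t i j, Integrable (fun s => U t s i * U t s j) μ := by
    intro t i j
    apply integrable_of_bound μ (C i * C j)
    · exact ((meas_entry' (hUmeas t) i).mul (meas_entry' (hUmeas t) j)).aestronglyMeasurable
    · filter_upwards [hUb t i, hUb t j] with s h1 h2
      rw [abs_mul]
      exact mul_le_mul h1 h2 (abs_nonneg _) (hCnn i)
  have hprod_int : ∀ t i j, Integrable (fun s => U t s i * U t s j * H t s i j) μ := by
    intro t i j
    apply Integrable.bdd_mul (c := C i * C j) (hHint t i j)
      ((meas_entry' (hUmeas t) i).mul (meas_entry' (hUmeas t) j)).aestronglyMeasurable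
    filter_upwards [hUb t i, hUb t j] with s h1 h2
    rw [Real.norm_eq_abs, Pi.mul_apply, abs_mul]
    exact mul_le_mul h1 h2 (abs_nonneg _) (hCnn i)
  have hg_int : ∀ t, Integrable (g t) μ := by
    intro t
    have hge : g t = fun s => ∑ i, ∑ j, U t s i * U t s j * H t s i j := by
      funext s; simp only [hg]; rw [dot_expand]
    rw [hge]
    exact integrable_finset_sum _ fun i _ => integrable_finset_sum _ fun j _ => hprod_int t i j
  -- factorization of the iterates through the past noise
  have hFactor : ∀ t, ∃ F : (Fin t → Matrix (Fin m) (Fin m) ℝ) → (Fin d → ℝ),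
      Measurable F ∧ ∀ s, x t s = F (fun i => H i s) := by
    intro t; induction t with
    | zero => exact ⟨fun _ => x0, measurable_const, fun s => hx0 s⟩
    | succ t ih =>
        obtain ⟨F, hF, hFx⟩ := ih
        refine ⟨fun u => F (fun i => u i.castSucc)
          - ω • (Aᵀ *ᵥ (u (Fin.last t) *ᵥ (A *ᵥ F (fun i => u i.castSucc) - b))), ?_, ?_⟩
        · have hpre : Measurable fun (u : Fin (t+1) → Matrix (Fin m) (Fin m) ℝ) =>
              F (fun i => u i.castSucc) :=
            hF.comp (measurable_pi_lambda _ fun i => measurable_pi_apply _)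
          have hlast : Measurable fun (u : Fin (t+1) → Matrix (Fin m) (Fin m) ℝ) =>
              u (Fin.last t) := measurable_pi_apply _
          exact hpre.sub ((meas_mulVec measurable_const (meas_mulVec hlast
            ((meas_mulVec measurable_const hpre).sub measurable_const))).const_smul ω)
        · intro s
          rw [hrec t s, hFx s]
          congr 1
  -- independence of the products of entries from the fresh noise
  have hIndep : ∀ t i j,
      IndepFun (fun s => U t s i * U t s j) (fun s => H t s i j) μ := by
    intro t i j
    obtain ⟨F, hF, hFx⟩ := hFactor t
    have hdisj : Disjoint (Finset.range t) ({t} : Finset ℕ) := by simp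
    have h0 := hHiid.indepFun_finset (Finset.range t) {t} hdisj hHmeas
    set φ : ((i' : (Finset.range t : Finset ℕ)) → Matrix (Fin m) (Fin m) ℝ) → ℝ :=
      fun u => (A *ᵥ F (fun i' : Fin t => u ⟨i'.val, Finset.mem_range.2 i'.isLt⟩) - b) i *
        (A *ᵥ F (fun i' : Fin t => u ⟨i'.val, Finset.mem_range.2 i'.isLt⟩) - b) j with hφ
    set ψ : ((i' : ({t} : Finset ℕ)) → Matrix (Fin m) (Fin m) ℝ) → ℝ :=
      fun u => u ⟨t, Finset.mem_singleton_self t⟩ i j with hψ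
    have hpre : Measurable fun (u : (i' : (Finset.range t : Finset ℕ)) →
        Matrix (Fin m) (Fin m) ℝ) => F (fun i' : Fin t => u ⟨i'.val, Finset.mem_range.2 i'.isLt⟩) :=
      hF.comp (measurable_pi_lambda _ fun i' => measurable_pi_apply _)
    have hUofy : Measurable fun (u : (i' : (Finset.range t : Finset ℕ)) →
        Matrix (Fin m) (Fin m) ℝ) => A *ᵥ F (fun i' : Fin t =>
          u ⟨i'.val, Finset.mem_range.2 i'.isLt⟩) - b :=
      (meas_mulVec measurable_const hpre).sub measurable_const
    have hφm : Measurable φ := ((measurable_pi_apply i).comp hUofy).mul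
      ((measurable_pi_apply j).comp hUofy)
    have hψm : Measurable ψ :=
      (measurable_pi_apply j).comp ((measurable_pi_apply i).comp (measurable_pi_apply _))
    have hcomp := h0.comp hφm hψm
    have he1 : (φ ∘ fun s (i' : (Finset.range t : Finset ℕ)) => H i' s)
        = fun s => U t s i * U t s j := by
      funext s
      simp only [Function.comp_apply, hφ, ← hFx s, hU]
    have he2 : (ψ ∘ fun s (i' : ({t} : Finset ℕ)) => H i' s) = fun s => H t s i j := by
      funext s; simp [hψ]
    rw [he1, he2] at hcomp
    exact hcomp
  -- expectation of fresh noise entries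
  have hentry_meas : ∀ (i j : Fin m),
      Measurable fun (M : Matrix (Fin m) (Fin m) ℝ) => M i j :=
    fun i j => (measurable_pi_apply j).comp (measurable_pi_apply i)
  have hEH : ∀ t i j, ∫ s, H t s i j ∂μ = W i j := by
    intro t i j
    rw [hW i j]
    rw [← integral_map (hHmeas t).aemeasurable (hentry_meas i j).aestronglyMeasurable,
      hHident t,
      integral_map (hHmeas 0).aemeasurable (hentry_meas i j).aestronglyMeasurable]
  -- the key expectation identity : E[g t] = E[Uᵀ W U]
  have hqmeas : ∀ t, Measurable fun s => U t s ⬝ᵥ (W *ᵥ U t s) :=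
    fun t => meas_dot (hUmeas t) (meas_mulVec measurable_const (hUmeas t))
  have hq_int : ∀ t, Integrable (fun s => U t s ⬝ᵥ (W *ᵥ U t s)) μ := by
    intro t
    have hqe : (fun s => U t s ⬝ᵥ (W *ᵥ U t s))
        = fun s => ∑ i, ∑ j, U t s i * U t s j * W i j := by
      funext s; rw [dot_expand]
    rw [hqe]
    exact integrable_finset_sum _ fun i _ => integrable_finset_sum _ fun j _ =>
      (hUij_int t i j).mul_const _
  have hgq : ∀ t, ∫ s, g t s ∂μ = ∫ s, U t s ⬝ᵥ (W *ᵥ U t s) ∂μ := by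
    intro t
    have hge : (fun s => g t s) = fun s => ∑ i, ∑ j, U t s i * U t s j * H t s i j := by
      funext s; simp only [hg]; rw [dot_expand]
    have hqe : (fun s => U t s ⬝ᵥ (W *ᵥ U t s))
        = fun s => ∑ i, ∑ j, U t s i * U t s j * W i j := by
      funext s; rw [dot_expand]
    rw [hge, hqe]
    rw [integral_finset_sum _ fun i _ => integrable_finset_sum _ fun j _ => hprod_int t i j,
      integral_finset_sum _ fun i _ => integrable_finset_sum _ fun j _ =>
        (hUij_int t i j).mul_const (W i j)]
    apply Finset.sum_congr rfl
    intro i _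
    rw [integral_finset_sum _ fun j _ => hprod_int t i j,
      integral_finset_sum _ fun j _ => (hUij_int t i j).mul_const _]
    apply Finset.sum_congr rfl
    intro j _
    have hmul := (hIndep t i j).integral_mul_eq_mul_integral (hUij_int t i j).aestronglyMeasurable
      (hHint t i j).aestronglyMeasurable
    have : (fun s => U t s i * U t s j * H t s i j)
        = (fun s => U t s i * U t s j) * (fun s => H t s i j) := rfl
    rw [this, hmul, hEH t i j, integral_mul_const]
  -- properties of W
  have hWsym : Wᵀ = W := by
    ext i j
    simp only [Matrix.transpose_apply, hW]
    apply integral_congr_ae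
    filter_upwards [hHas 0] with s hs
    have := congrFun (congrFun hs.1.1 j) i
    simpa using this.symm
  have hWpos : ∀ z : Fin m → ℝ, 0 ≤ z ⬝ᵥ (W *ᵥ z) := by
    intro z
    rw [dot_expand]
    have h2 : ∀ i j : Fin m, z i * z j * W i j = ∫ s, z i * z j * H 0 s i j ∂μ := by
      intro i j
      rw [hW i j, ← integral_const_mul]
    have h3 : ∑ i, ∑ j, z i * z j * W i j = ∫ s, ∑ i, ∑ j, z i * z j * H 0 s i j ∂μ := by
      rw [integral_finset_sum _ fun i _ => integrable_finset_sum _ fun j _ =>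
        (hHint 0 i j).const_mul _]
      refine Finset.sum_congr rfl fun i _ => ?_
      rw [integral_finset_sum _ fun j _ => (hHint 0 i j).const_mul _]
      exact Finset.sum_congr rfl fun j _ => h2 i j
    rw [h3]
    apply integral_nonneg_of_ae
    filter_upwards [hHas 0] with s hs
    have := hs.1.dotProduct_mulVec_nonneg z
    rw [← dot_expand]
    simpa using this
  -- pointwise convexity bound for the Cesaro average
  have hkpos : (0:ℝ) < (k:ℝ) := by exact_mod_cast hk
  have hkne : ((k:ℝ)) ≠ 0 := ne_of_gt hkpos
  have hhat : ∀ s, A *ᵥ ((k:ℝ)⁻¹ • ∑ t ∈ Finset.Icc 1 k, x t s) - b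
      = (k:ℝ)⁻¹ • ∑ t ∈ Finset.Icc 1 k, U t s := by
    intro s
    rw [Matrix.mulVec_smul, mulVec_sum']
    simp only [hU]
    rw [Finset.sum_sub_distrib, Finset.sum_const, Nat.card_Icc, smul_sub]
    congr 1
    rw [← Nat.cast_smul_eq_nsmul ℝ, smul_smul]
    have : (k + 1 - 1 : ℕ) = k := by omega
    rw [this, inv_mul_cancel₀ hkne, one_smul]
  have hfU : ∀ t s, f (x t s) = 1/2 * (U t s ⬝ᵥ (W *ᵥ U t s)) := by
    intro t s; rw [hf]
  have hpoint : ∀ s, f ((k:ℝ)⁻¹ • ∑ t ∈ Finset.Icc 1 k, x t s)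
      ≤ (k:ℝ)⁻¹ * ∑ t ∈ Finset.Icc 1 k, f (x t s) := by
    intro s
    have hcq := cesaro_quad W hWsym hWpos k hk (fun t => U t s)
    rw [hf, hhat s]
    have hr : (k:ℝ)⁻¹ * ∑ t ∈ Finset.Icc 1 k, f (x t s)
        = 1/2 * ((k:ℝ)⁻¹ * ∑ t ∈ Finset.Icc 1 k, (U t s ⬝ᵥ (W *ᵥ U t s))) := by
      simp_rw [hfU]
      simp only [Finset.mul_sum]
      exact Finset.sum_congr rfl fun t _ => by ring
    rw [hr]
    linarith [hcq]
  -- integrability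
  have hfx_int : ∀ t, Integrable (fun s => f (x t s)) μ := by
    intro t
    have : (fun s => f (x t s)) = fun s => 1/2 * (U t s ⬝ᵥ (W *ᵥ U t s)) := funext (hfU t)
    rw [this]
    exact (hq_int t).const_mul _
  have hRHS_int : Integrable (fun s => (k:ℝ)⁻¹ * ∑ t ∈ Finset.Icc 1 k, f (x t s)) μ :=
    (integrable_finset_sum _ fun t _ => hfx_int t).const_mul _
  have hf_nonneg : ∀ y, 0 ≤ f y := by
    intro y; rw [hf]
    exact mul_nonneg (by norm_num) (hWpos _)
  have hhat_meas : Measurable fun s => f ((k:ℝ)⁻¹ • ∑ t ∈ Finset.Icc 1 k, x t s) := by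
    have hsum0 : Measurable fun s => ∑ t ∈ Finset.Icc 1 k, x t s :=
      Finset.measurable_sum _ fun t _ => hxmeas t
    have hxhat : Measurable fun s => (k:ℝ)⁻¹ • ∑ t ∈ Finset.Icc 1 k, x t s := by
      apply measurable_pi_lambda
      intro i
      have : (fun s => ((k:ℝ)⁻¹ • ∑ t ∈ Finset.Icc 1 k, x t s) i)
          = fun s => (k:ℝ)⁻¹ * (∑ t ∈ Finset.Icc 1 k, x t s) i := rfl
      rw [this]
      exact (measurable_const.mul ((measurable_pi_apply i).comp hsum0))
    have hUhat : Measurable fun s => A *ᵥ ((k:ℝ)⁻¹ • ∑ t ∈ Finset.Icc 1 k, x t s) - b :=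
      (meas_mulVec measurable_const hxhat).sub measurable_const
    have : (fun s => f ((k:ℝ)⁻¹ • ∑ t ∈ Finset.Icc 1 k, x t s))
        = fun s => 1/2 * ((A *ᵥ ((k:ℝ)⁻¹ • ∑ t ∈ Finset.Icc 1 k, x t s) - b) ⬝ᵥ
            (W *ᵥ (A *ᵥ ((k:ℝ)⁻¹ • ∑ t ∈ Finset.Icc 1 k, x t s) - b))) := by
      funext s; rw [hf]
    rw [this]
    exact ((meas_dot hUhat (meas_mulVec measurable_const hUhat))).const_mul _
  have hhat_int : Integrable (fun s => f ((k:ℝ)⁻¹ • ∑ t ∈ Finset.Icc 1 k, x t s)) μ := by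
    apply Integrable.mono' hRHS_int hhat_meas.aestronglyMeasurable
    apply ae_of_all
    intro s
    rw [Real.norm_eq_abs, abs_of_nonneg (hf_nonneg _)]
    exact hpoint s
  -- the sum of the g's has small expectation
  have hsumg : ∑ t ∈ Finset.Icc 1 k, ∫ s, g t s ∂μ ≤ N0 / (ω * (2 - ω)) := by
    rw [← integral_finset_sum _ fun t _ => hg_int t]
    have hb : ∀ᵐ s ∂μ, ∑ t ∈ Finset.Icc 1 k, g t s ≤ N0 / (ω * (2 - ω)) := by
      filter_upwards [hcons] with s hs
      rw [le_div_iff₀ hc]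
      linarith [hs.2.1]
    calc ∫ s, ∑ t ∈ Finset.Icc 1 k, g t s ∂μ
        ≤ ∫ _, N0 / (ω * (2 - ω)) ∂μ :=
          integral_mono_ae (integrable_finset_sum _ fun t _ => hg_int t)
            (integrable_const _) hb
      _ = N0 / (ω * (2 - ω)) := by simp
  -- final chain
  calc ∫ s, f ((k:ℝ)⁻¹ • ∑ t ∈ Finset.Icc 1 k, x t s) ∂μ
      ≤ ∫ s, (k:ℝ)⁻¹ * ∑ t ∈ Finset.Icc 1 k, f (x t s) ∂μ :=
        integral_mono hhat_int hRHS_int hpoint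
    _ = (k:ℝ)⁻¹ * ∑ t ∈ Finset.Icc 1 k, ∫ s, f (x t s) ∂μ := by
        rw [integral_const_mul, integral_finset_sum _ fun t _ => hfx_int t]
    _ = (k:ℝ)⁻¹ * ∑ t ∈ Finset.Icc 1 k, (1/2 * ∫ s, g t s ∂μ) := by
        congr 1
        refine Finset.sum_congr rfl fun t _ => ?_
        have : (fun s => f (x t s)) = fun s => 1/2 * (U t s ⬝ᵥ (W *ᵥ U t s)) := funext (hfU t)
        rw [this, integral_const_mul, ← hgq t]
    _ = (k:ℝ)⁻¹ * (1/2 * ∑ t ∈ Finset.Icc 1 k, ∫ s, g t s ∂μ) := by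
        simp only [Finset.mul_sum]
    _ ≤ (k:ℝ)⁻¹ * (1/2 * (N0 / (ω * (2 - ω)))) := by
        apply mul_le_mul_of_nonneg_left _ (by positivity)
        apply mul_le_mul_of_nonneg_left hsumg (by norm_num)
    _ = N0 / (2 * ω * (2 - ω) * k) := by
        have hωne : ω ≠ 0 := ne_of_gt hω0
        have h2ω : (2 - ω) ≠ 0 := ne_of_gt (by linarith)
        have hden : (2 * ω * (2 - ω) * (k:ℝ)) ≠ 0 := by
          apply ne_of_gt; nlinarith [hkpos, hc]
        rw [eq_div_iff hden]
        calc (k:ℝ)⁻¹ * (1/2 * (N0 / (ω*(2-ω)))) * (2*ω*(2-ω)*(k:ℝ))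
            = (N0 / (ω*(2-ω))) * (ω*(2-ω)) * ((k:ℝ)⁻¹ * (k:ℝ)) := by ring
          _ = N0 := by rw [div_mul_cancel₀ _ (ne_of_gt hc), inv_mul_cancel₀ hkne, mul_one]
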